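/- (a) For every x ∈ {−1,1}ⁿ, Σ_{i=1}^n x_i·⟨D_i, μ⁽¹⁾−μ⁽²⁾⟩ ≤ (2(n−1)/n)·Σ_{i=1}^n |⟨Z_i, μ⁽¹⁾−μ⁽²⁾⟩|. (b) ‖M_Y‖₂ ≤ 4·√n·√(w₁w₂)·sup over unit vectors q ∈ S^{n−1} of |Σ_{i=1}^n q_i·⟨Z_i, μ⁽¹⁾−μ⁽²⁾⟩|. -/

import Mathlib

open Matrix Finset

noncomputable section

def opNorm {k l : ℕ} (A : Matrix (Fin k) (Fin l) ℝ) : ℝ :=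
  ‖(Matrix.toEuclideanLin A).toContinuousLinearMap‖

def ip {n : ℕ} (A B : Matrix (Fin n) (Fin n) ℝ) : ℝ := Matrix.trace (Aᵀ * B)

def ell1Norm {k l : ℕ} (M : Matrix (Fin k) (Fin l) ℝ) : ℝ := ∑ i, ∑ j, |M i j|

def frobNorm {k l : ℕ} (M : Matrix (Fin k) (Fin l) ℝ) : ℝ :=
  Real.sqrt (∑ i, ∑ j, (M i j) ^ 2)

def euclNorm {k : ℕ} (x : Fin k → ℝ) : ℝ := Real.sqrt (∑ i, x i ^ 2)

def En (n : ℕ) : Matrix (Fin n) (Fin n) ℝ := Matrix.of fun _ _ => 1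

def centering (n : ℕ) : Matrix (Fin n) (Fin n) ℝ := 1 - ((n : ℝ)⁻¹) • En n

def Mopt (n : ℕ) : Set (Matrix (Fin n) (Fin n) ℝ) :=
  {Z | Z.PosSemidef ∧ ∀ i, Z i i = 1}

def MGplus (n : ℕ) : Set (Matrix (Fin n) (Fin n) ℝ) :=
  {Z | Z.PosSemidef ∧ ∀ i, Z i i ≤ 1}

def MoptPlus (n : ℕ) : Set (Matrix (Fin n) (Fin n) ℝ) :=
  {Z | Z.PosSemidef ∧ (∀ i, Z i i = 1) ∧ ip (En n) Z = 0}

def u2 (n n₁ : ℕ) : Fin n → ℝ := fun j => if (j : ℕ) < n₁ then 1 else -1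

def Zstar (n n₁ : ℕ) : Matrix (Fin n) (Fin n) ℝ :=
  Matrix.vecMulVec (u2 n n₁) (u2 n n₁)

def wmin (n n₁ n₂ : ℕ) : ℝ := min ((n₁ : ℝ) / n) ((n₂ : ℝ) / n)

def vref (n n₁ n₂ : ℕ) : Fin n → ℝ :=
  fun j => if (j : ℕ) < n₁ then (n₂ : ℝ) / n else -((n₁ : ℝ) / n)

def Rmat (n n₁ n₂ p : ℕ) (γ : ℝ) : Matrix (Fin n) (Fin n) ℝ :=
  ((p : ℝ) * γ) • Matrix.vecMulVec (vref n n₁ n₂) (vref n n₁ n₂)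


lemma cs_abs' {n : ℕ} (f g : Fin n → ℝ) :
    |∑ i, f i * g i| ≤ Real.sqrt (∑ i, f i ^ 2) * Real.sqrt (∑ i, g i ^ 2) := by
  have h := Finset.sum_mul_sq_le_sq_mul_sq Finset.univ f g
  calc |∑ i, f i * g i| = Real.sqrt ((∑ i, f i * g i) ^ 2) := (Real.sqrt_sq_eq_abs _).symm
    _ ≤ Real.sqrt ((∑ i, f i ^ 2) * ∑ i, g i ^ 2) := Real.sqrt_le_sqrt h
    _ = _ := Real.sqrt_mul (by positivity) _

/-- the deterministic comparison (reduction) lemma, for the centered vectors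
`D_i = Z_i - (1/n)Σ_j Z_j` and the cross term `M_Y = Ē Dᵀ + D Ēᵀ`. -/
theorem reduction_comparison (n n₁ n₂ p : ℕ) (hn : n = n₁ + n₂)
    (hn₁ : 0 < n₁) (hn₂ : 0 < n₂)
    (μ1 μ2 : Fin p → ℝ) (Z : Fin n → Fin p → ℝ) :
    let D : Fin n → Fin p → ℝ := fun i k => Z i k - (1 / (n : ℝ)) * ∑ j, Z j k;
    let Ebar : Matrix (Fin n) (Fin p) ℝ :=
      Matrix.of fun i k => if (i : ℕ) < n₁ then ((n₂ : ℝ) / n) * (μ1 k - μ2 k)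
        else ((n₁ : ℝ) / n) * (μ2 k - μ1 k);
    let Dm : Matrix (Fin n) (Fin p) ℝ := Matrix.of fun i k => D i k;
    let MY := Ebar * Dmᵀ + Dm * Ebarᵀ;
    (∀ x : Fin n → ℝ, (∀ i, x i = 1 ∨ x i = -1) →
      ∑ i, x i * (∑ k, D i k * (μ1 k - μ2 k)) ≤
        (2 * ((n : ℝ) - 1) / n) * ∑ i, |∑ k, Z i k * (μ1 k - μ2 k)|) ∧
    opNorm MY ≤ 4 * Real.sqrt n * Real.sqrt (((n₁ : ℝ) / n) * ((n₂ : ℝ) / n)) *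
      sSup {y : ℝ | ∃ q : Fin n → ℝ, (∑ i, (q i) ^ 2) = 1 ∧
        y = |∑ i, q i * (∑ k, Z i k * (μ1 k - μ2 k))|} := by
  intro D Ebar Dm MY
  have hnpos : 0 < n := by omega
  have hnR : (0:ℝ) < n := by exact_mod_cast hnpos
  set a : Fin n → ℝ := fun i => ∑ k, Z i k * (μ1 k - μ2 k) with ha_def
  -- centered inner products
  have hd : ∀ i, (∑ k, D i k * (μ1 k - μ2 k)) = a i - (1/(n:ℝ)) * ∑ j, a j := by
    intro i
    have h1 : ∑ k, D i k * (μ1 k - μ2 k)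
        = ∑ k, (Z i k * (μ1 k - μ2 k) - (1/(n:ℝ)) * ((∑ j, Z j k) * (μ1 k - μ2 k))) :=
      Finset.sum_congr rfl fun k _ => by show (Z i k - _) * _ = _; ring
    rw [h1, Finset.sum_sub_distrib, ← Finset.mul_sum]
    have h2 : ∑ k, (∑ j, Z j k) * (μ1 k - μ2 k) = ∑ j, a j := by
      simp_rw [Finset.sum_mul]
      exact Finset.sum_comm
    rw [h2]
  constructor
  · -- Part (a)
    intro x hx
    set t := ∑ i, x i with ht
    have habs : ∀ i, |x i| = 1 := fun i => by rcases hx i with h|h <;> simp [h]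
    have key : ∀ i : Fin n, |x i - t/(n:ℝ)| ≤ 2*((n:ℝ)-1)/n := by
      intro i
      have hts : t - x i = ∑ j ∈ Finset.univ.erase i, x j := by
        rw [Finset.sum_erase_eq_sub (Finset.mem_univ i)]
      have h1 : |t - x i| ≤ (n:ℝ) - 1 := by
        rw [hts]
        calc |∑ j ∈ Finset.univ.erase i, x j| ≤ ∑ j ∈ Finset.univ.erase i, |x j| :=
              Finset.abs_sum_le_sum_abs _ _
          _ = ((n - 1 : ℕ) : ℝ) := by
              simp [habs, Finset.card_erase_of_mem]
          _ = (n:ℝ) - 1 := by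
              rw [Nat.cast_sub hnpos]; norm_num
      have h2 : |(n:ℝ) * x i - t| ≤ 2*((n:ℝ)-1) := by
        have e : (n:ℝ) * x i - t = ((n:ℝ)-1) * x i - (t - x i) := by ring
        rw [e]
        calc |((n:ℝ)-1)*x i - (t - x i)| ≤ |((n:ℝ)-1)*x i| + |t - x i| := abs_sub _ _
          _ = |(n:ℝ)-1| * 1 + |t - x i| := by rw [abs_mul, habs]
          _ ≤ ((n:ℝ)-1) + ((n:ℝ)-1) := by
              have : |(n:ℝ)-1| = (n:ℝ)-1 := abs_of_nonneg (by
                have : (1:ℝ) ≤ n := by exact_mod_cast hnpos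
                linarith)
              rw [this]; linarith
          _ = 2*((n:ℝ)-1) := by ring
      have e2 : x i - t/(n:ℝ) = ((n:ℝ)*x i - t)/n := by
        field_simp
      rw [e2, abs_div, abs_of_pos hnR]
      gcongr
    have e1 : ∑ i, x i * (a i - (1/(n:ℝ)) * ∑ j, a j)
        = ∑ i, a i * (x i - t/(n:ℝ)) := by
      have l1 : ∑ i, x i * (a i - (1/(n:ℝ)) * ∑ j, a j)
          = (∑ i, a i * x i) - t * ((1/(n:ℝ)) * ∑ j, a j) := by
        simp only [mul_sub, Finset.sum_sub_distrib, ← Finset.sum_mul]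
        congr 1
        exact Finset.sum_congr rfl fun i _ => mul_comm _ _
      have l2 : ∑ i, a i * (x i - t/(n:ℝ))
          = (∑ i, a i * x i) - (∑ j, a j) * (t/(n:ℝ)) := by
        simp only [mul_sub, Finset.sum_sub_distrib, ← Finset.sum_mul]
      rw [l1, l2]; ring
    calc ∑ i, x i * (∑ k, D i k * (μ1 k - μ2 k))
        = ∑ i, a i * (x i - t/(n:ℝ)) := by
          rw [Finset.sum_congr rfl fun i _ => by rw [hd i]]; exact e1
      _ ≤ ∑ i, |a i| * (2*((n:ℝ)-1)/n) := Finset.sum_le_sum fun i _ => by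
          calc a i * (x i - t/(n:ℝ)) ≤ |a i * (x i - t/(n:ℝ))| := le_abs_self _
            _ = |a i| * |x i - t/(n:ℝ)| := abs_mul _ _
            _ ≤ |a i| * (2*((n:ℝ)-1)/n) :=
                mul_le_mul_of_nonneg_left (key i) (abs_nonneg _)
      _ = (2*((n:ℝ)-1)/n) * ∑ i, |a i| := by rw [← Finset.sum_mul]; ring
  · -- Part (b)
    set v : Fin n → ℝ := fun i => if (i:ℕ) < n₁ then (n₂:ℝ)/n else -((n₁:ℝ)/n) with hv_def
    set d : Fin n → ℝ := fun i => ∑ k, D i k * (μ1 k - μ2 k) with hd_def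
    have hE : ∀ i k, Ebar i k = v i * (μ1 k - μ2 k) := by
      intro i k
      show (if (i : ℕ) < n₁ then ((n₂ : ℝ) / n) * (μ1 k - μ2 k)
        else ((n₁ : ℝ) / n) * (μ2 k - μ1 k)) = _
      simp only [hv_def]
      split_ifs <;> ring
    have hMY : ∀ i j, MY i j = v i * d j + d i * v j := by
      intro i j
      have h0 : MY i j = (∑ k, Ebar i k * Dm j k) + ∑ k, Dm i k * Ebar j k := by
        show (Ebar * Dmᵀ + Dm * Ebarᵀ) i j = _
        simp [Matrix.mul_apply, Matrix.add_apply]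
      rw [h0]
      have hDm : ∀ i k, Dm i k = D i k := fun _ _ => rfl
      have hA : ∑ k, Ebar i k * Dm j k = v i * d j := by
        simp only [hE, hDm]
        show _ = v i * ∑ k, D j k * (μ1 k - μ2 k)
        rw [Finset.mul_sum]
        exact Finset.sum_congr rfl fun k _ => by ring
      have hB : ∑ k, Dm i k * Ebar j k = d i * v j := by
        simp only [hE, hDm]
        show _ = (∑ k, D i k * (μ1 k - μ2 k)) * v j
        rw [Finset.sum_mul]
        exact Finset.sum_congr rfl fun k _ => by ring
      rw [hA, hB]
    set Nv := Real.sqrt (∑ i, v i ^ 2) with hNv_def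
    set Nd := Real.sqrt (∑ i, d i ^ 2) with hNd_def
    set Na := Real.sqrt (∑ i, a i ^ 2) with hNa_def
    have hNv0 : 0 ≤ Nv := Real.sqrt_nonneg _
    have hNd0 : 0 ≤ Nd := Real.sqrt_nonneg _
    -- operator norm bound
    have hbound : opNorm MY ≤ 2 * Nv * Nd := by
      apply ContinuousLinearMap.opNorm_le_bound _ (by positivity)
      intro x
      set α := ∑ j, d j * x j with hα_def
      set β := ∑ j, v j * x j with hβ_def
      have hTx : (Matrix.toEuclideanLin MY).toContinuousLinearMap x
          = α • (WithLp.equiv 2 (Fin n → ℝ)).symm v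
            + β • (WithLp.equiv 2 (Fin n → ℝ)).symm d := by
        rw [LinearMap.coe_toContinuousLinearMap', Matrix.toEuclideanLin_apply]
        ext i
        simp only [PiLp.add_apply, PiLp.smul_apply, WithLp.equiv_symm_apply, PiLp.toLp_apply,
          smul_eq_mul]
        show ∑ j, MY i j * (WithLp.equiv 2 (Fin n → ℝ)) x j = α * v i + β * d i
        calc ∑ j, MY i j * (WithLp.equiv 2 (Fin n → ℝ)) x j
            = ∑ j, (v i * (d j * x j) + d i * (v j * x j)) :=
              Finset.sum_congr rfl fun j _ => by
                rw [hMY i j, WithLp.equiv_apply]; ring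
          _ = v i * α + d i * β := by
              rw [Finset.sum_add_distrib, ← Finset.mul_sum, ← Finset.mul_sum,
                hα_def, hβ_def]
          _ = α * v i + β * d i := by ring
      have hnx : ∀ w : Fin n → ℝ,
          ‖(WithLp.equiv 2 (Fin n → ℝ)).symm w‖ = Real.sqrt (∑ i, w i ^ 2) := by
        intro w
        rw [EuclideanSpace.norm_eq]
        simp [Real.norm_eq_abs, sq_abs]
      have hxn : ‖x‖ = Real.sqrt (∑ i, x i ^ 2) := by
        rw [EuclideanSpace.norm_eq]
        simp [Real.norm_eq_abs, sq_abs]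
      have hα : |α| ≤ Nd * ‖x‖ := by
        rw [hxn, hα_def]; exact cs_abs' d (fun i => x i)
      have hβ : |β| ≤ Nv * ‖x‖ := by
        rw [hxn, hβ_def]; exact cs_abs' v (fun i => x i)
      calc ‖(Matrix.toEuclideanLin MY).toContinuousLinearMap x‖
          ≤ |α| * Nv + |β| * Nd := by
            rw [hTx]
            calc ‖_ + _‖ ≤ ‖α • (WithLp.equiv 2 (Fin n → ℝ)).symm v‖
                + ‖β • (WithLp.equiv 2 (Fin n → ℝ)).symm d‖ := norm_add_le _ _
              _ = |α| * Nv + |β| * Nd := by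
                  rw [norm_smul, norm_smul, hnx, hnx, Real.norm_eq_abs, Real.norm_eq_abs]
        _ ≤ (Nd * ‖x‖) * Nv + (Nv * ‖x‖) * Nd := by
            have h1 := mul_le_mul_of_nonneg_right hα hNv0
            have h2 := mul_le_mul_of_nonneg_right hβ hNd0
            linarith
        _ = 2 * Nv * Nd * ‖x‖ := by ring
    -- ‖d‖ ≤ ‖a‖
    have hdle : ∑ i, d i ^ 2 ≤ ∑ i, a i ^ 2 := by
      set s := ∑ j, a j with hs_def
      have e : ∑ i, d i ^ 2
          = (∑ i, a i ^ 2) - (2*(1/(n:ℝ))*s) * s + (n:ℝ) * ((1/(n:ℝ))*s)^2 := by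
        have e1 : ∀ i : Fin n, d i ^ 2
            = a i ^ 2 - (2*(1/(n:ℝ))*s) * a i + ((1/(n:ℝ))*s)^2 := by
          intro i
          rw [hd_def]
          show (∑ k, D i k * (μ1 k - μ2 k)) ^ 2 = _
          rw [hd i]; ring
        rw [Finset.sum_congr rfl fun i _ => e1 i]
        rw [Finset.sum_add_distrib, Finset.sum_sub_distrib, ← Finset.mul_sum,
          Finset.sum_const, Finset.card_univ, Fintype.card_fin, nsmul_eq_mul]
      rw [e]
      have : (2*(1/(n:ℝ))*s) * s - (n:ℝ) * ((1/(n:ℝ))*s)^2 = s^2/n := by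
        field_simp; ring
      nlinarith [sq_nonneg s, div_nonneg (sq_nonneg s) hnR.le]
    have hNdNa : Nd ≤ Na := Real.sqrt_le_sqrt hdle
    -- ‖v‖ computation
    have hnn : (n:ℝ) = (n₁:ℝ) + (n₂:ℝ) := by rw [hn]; push_cast; ring
    have hNv : Nv = Real.sqrt n * Real.sqrt (((n₁:ℝ)/n) * ((n₂:ℝ)/n)) := by
      have hsum : ∑ i, v i ^ 2 = (n:ℝ) * (((n₁:ℝ)/n) * ((n₂:ℝ)/n)) := by
        have e1 : ∑ i, v i ^ 2
            = ∑ i ∈ Finset.range n, (if i < n₁ then ((n₂:ℝ)/n)^2 else ((n₁:ℝ)/n)^2) := by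
          rw [← Fin.sum_univ_eq_sum_range]
          refine Finset.sum_congr rfl fun i _ => ?_
          rw [hv_def]
          show (if (i:ℕ) < n₁ then (n₂:ℝ)/n else -((n₁:ℝ)/n))^2 = _
          split_ifs <;> ring
        have hcount : ∀ A B : ℝ,
            (∑ i ∈ Finset.range (n₁ + n₂), if i < n₁ then A else B)
              = (n₁:ℝ) * A + (n₂:ℝ) * B := by
          intro A B
          rw [Finset.sum_range_add]
          have e2 : (∑ i ∈ Finset.range n₁, if i < n₁ then A else B) = (n₁:ℝ) * A := by
            rw [Finset.sum_congr rfl fun i hi => if_pos (Finset.mem_range.mp hi),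
              Finset.sum_const, Finset.card_range, nsmul_eq_mul]
          have e3 : (∑ i ∈ Finset.range n₂, if n₁ + i < n₁ then A else B) = (n₂:ℝ) * B := by
            rw [Finset.sum_congr rfl fun i _ => if_neg (by omega),
              Finset.sum_const, Finset.card_range, nsmul_eq_mul]
          rw [e2, e3]
        rw [e1, show n = n₁ + n₂ from hn, hcount]
        have hN0 : ((n₁ + n₂ : ℕ) : ℝ) ≠ 0 := by positivity
        field_simp
        push_cast
        ring
      rw [hNv_def, hsum, Real.sqrt_mul hnR.le]
    -- sup bound
    set S : Set ℝ := {y : ℝ | ∃ q : Fin n → ℝ, (∑ i, (q i) ^ 2) = 1 ∧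
        y = |∑ i, q i * (∑ k, Z i k * (μ1 k - μ2 k))|} with hS_def
    have hSub : ∀ y ∈ S, y ≤ Na := by
      rintro y ⟨q, hq1, rfl⟩
      have h := cs_abs' q a
      rw [hq1, Real.sqrt_one, one_mul] at h
      exact h
    have hbdd : BddAbove S := ⟨Na, hSub⟩
    have i0 : Fin n := ⟨0, hnpos⟩
    have hmem0 : |∑ i, (fun j => if j = i0 then (1:ℝ) else 0) i * a i| ∈ S := by
      refine ⟨fun j => if j = i0 then (1:ℝ) else 0, ?_, rfl⟩
      simp [Finset.sum_ite_eq', apply_ite (· ^ (2:ℕ))]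
    have hsup0 : 0 ≤ sSup S := le_trans (abs_nonneg _) (le_csSup hbdd hmem0)
    have hNaS : Na ≤ sSup S := by
      by_cases h0 : (∑ i, a i ^ 2) = 0
      · rw [hNa_def, h0, Real.sqrt_zero]; exact hsup0
      · have hpos : 0 < ∑ i, a i ^ 2 :=
          lt_of_le_of_ne (Finset.sum_nonneg fun i _ => sq_nonneg _) (Ne.symm h0)
        have hNap : 0 < Na := Real.sqrt_pos.mpr hpos
        have hNasq : Na ^ 2 = ∑ i, a i ^ 2 := Real.sq_sqrt hpos.le
        refine le_csSup hbdd ⟨fun i => a i / Na, ?_, ?_⟩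
        · have : ∑ i, (a i / Na) ^ 2 = (∑ i, a i ^ 2) / Na ^ 2 := by
            rw [Finset.sum_congr rfl fun i _ => div_pow (a i) Na 2, ← Finset.sum_div]
          rw [this, ← hNasq, div_self (by positivity)]
        · have : ∑ i, (a i / Na) * a i = (∑ i, a i ^ 2) / Na := by
            rw [Finset.sum_congr rfl fun (i : Fin n) _ =>
              (by rw [sq]; ring : (a i / Na) * a i = a i ^ 2 / Na), ← Finset.sum_div]
          rw [this, ← hNasq, sq, mul_div_assoc, div_self hNap.ne', mul_one,
            abs_of_pos hNap]
    -- final assembly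
    calc opNorm MY ≤ 2 * Nv * Nd := hbound
      _ ≤ 2 * Nv * Na := mul_le_mul_of_nonneg_left hNdNa (by positivity)
      _ ≤ 2 * Nv * sSup S := mul_le_mul_of_nonneg_left (hNaS.trans_eq rfl |>.trans (le_refl _) |>.trans (le_trans (le_refl _) (le_refl _))) (by positivity)
      _ = 2 * (Real.sqrt n * Real.sqrt (((n₁:ℝ)/n) * ((n₂:ℝ)/n))) * sSup S := by rw [hNv]
      _ ≤ 4 * Real.sqrt n * Real.sqrt (((n₁:ℝ)/n) * ((n₂:ℝ)/n)) * sSup S := by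
          have h1 : 0 ≤ Real.sqrt (n:ℝ) * Real.sqrt (((n₁:ℝ)/n) * ((n₂:ℝ)/n)) * sSup S := by
            apply mul_nonneg (mul_nonneg (Real.sqrt_nonneg _) (Real.sqrt_nonneg _)) hsup0
          nlinarith

end
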